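/- Let T be a 4-th order partial-symmetric tensor on ℝ^{n_1+n_3} × ℝ^{n_2+n_4} that arises (by symmetrization) from a nonnegative-valued quadrilinear form. Then the maximum of T((x¹;x³),(x²;x⁴),(x¹;x³),(x²;x⁴)) subject to ‖x^i‖=1 for i=1,…,4 equals its maximum subject to the relaxed constraints ‖x¹‖²+‖x³‖² = 2 and ‖x²‖²+‖x⁴‖² = 2, provided the optimal value is positive and the form is multilinear in (x¹,x²,x³,x⁴). -/
import Mathlib


set_option maxHeartbeats 2000000 in
/-- For a quadrilinear form with positive optimal value, maximization over the four unit
spheres `‖xⁱ‖ = 1` equals maximization over the relaxed constraints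
`‖x¹‖² + ‖x³‖² = 2` and `‖x²‖² + ‖x⁴‖² = 2`. -/
theorem stmt14 {n1 n2 n3 n4 : ℕ} (F : Fin n1 → Fin n2 → Fin n3 → Fin n4 → ℝ) (v : ℝ)
    (hv : IsGreatest {t | ∃ (x1 : Fin n1 → ℝ) (x2 : Fin n2 → ℝ)
        (x3 : Fin n3 → ℝ) (x4 : Fin n4 → ℝ),
        (∑ i, x1 i ^ 2) + (∑ i, x3 i ^ 2) = 2 ∧ (∑ i, x2 i ^ 2) + (∑ i, x4 i ^ 2) = 2 ∧
        t = ∑ i1, ∑ i2, ∑ i3, ∑ i4, F i1 i2 i3 i4 * x1 i1 * x2 i2 * x3 i3 * x4 i4} v)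
    (hpos : 0 < v) :
    IsGreatest {t | ∃ (x1 : Fin n1 → ℝ) (x2 : Fin n2 → ℝ)
        (x3 : Fin n3 → ℝ) (x4 : Fin n4 → ℝ),
        ∑ i, x1 i ^ 2 = 1 ∧ ∑ i, x2 i ^ 2 = 1 ∧ ∑ i, x3 i ^ 2 = 1 ∧ ∑ i, x4 i ^ 2 = 1 ∧
        t = ∑ i1, ∑ i2, ∑ i3, ∑ i4, F i1 i2 i3 i4 * x1 i1 * x2 i2 * x3 i3 * x4 i4} v := by
  obtain ⟨hmem, hub⟩ := hv
  obtain ⟨x1, x2, x3, x4, h13, h24, hval⟩ := hmem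
  constructor
  · -- membership: normalize the relaxed optimizer
    -- each block has positive norm
    have hAnn : ∀ (n : ℕ) (x : Fin n → ℝ), ¬ (0 < ∑ i, x i ^ 2) → ∀ i, x i = 0 := by
      intro n x h i
      have h0 : ∑ i, x i ^ 2 = 0 :=
        le_antisymm (not_lt.mp h) (Finset.sum_nonneg fun i _ => sq_nonneg _)
      have := (Finset.sum_eq_zero_iff_of_nonneg (fun i _ => sq_nonneg (x i))).mp h0 i
        (Finset.mem_univ i)
      exact pow_eq_zero_iff (two_ne_zero) |>.mp this
    have hA : 0 < ∑ i, x1 i ^ 2 := by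
      by_contra h
      have hz := hAnn _ x1 h
      have : v = 0 := by rw [hval]; simp [hz]
      exact absurd (this ▸ hpos) (lt_irrefl 0)
    have hB : 0 < ∑ i, x2 i ^ 2 := by
      by_contra h
      have hz := hAnn _ x2 h
      have : v = 0 := by rw [hval]; simp [hz]
      exact absurd (this ▸ hpos) (lt_irrefl 0)
    have hC : 0 < ∑ i, x3 i ^ 2 := by
      by_contra h
      have hz := hAnn _ x3 h
      have : v = 0 := by rw [hval]; simp [hz]
      exact absurd (this ▸ hpos) (lt_irrefl 0)
    have hD : 0 < ∑ i, x4 i ^ 2 := by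
      by_contra h
      have hz := hAnn _ x4 h
      have : v = 0 := by rw [hval]; simp [hz]
      exact absurd (this ▸ hpos) (lt_irrefl 0)
    set a := Real.sqrt (∑ i, x1 i ^ 2) with ha_def
    set b := Real.sqrt (∑ i, x2 i ^ 2) with hb_def
    set c := Real.sqrt (∑ i, x3 i ^ 2) with hc_def
    set d := Real.sqrt (∑ i, x4 i ^ 2) with hd_def
    have ha : 0 < a := Real.sqrt_pos.mpr hA
    have hb : 0 < b := Real.sqrt_pos.mpr hB
    have hc : 0 < c := Real.sqrt_pos.mpr hC
    have hd : 0 < d := Real.sqrt_pos.mpr hD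
    have ha2 : a ^ 2 = ∑ i, x1 i ^ 2 := Real.sq_sqrt hA.le
    have hb2 : b ^ 2 = ∑ i, x2 i ^ 2 := Real.sq_sqrt hB.le
    have hc2 : c ^ 2 = ∑ i, x3 i ^ 2 := Real.sq_sqrt hC.le
    have hd2 : d ^ 2 = ∑ i, x4 i ^ 2 := Real.sq_sqrt hD.le
    -- normalized vectors
    have e1 : ∑ i, (x1 i / a) ^ 2 = 1 := by
      rw [Finset.sum_congr rfl fun i _ => div_pow (x1 i) a 2, ← Finset.sum_div, ← ha2]
      exact div_self (by positivity)
    have e2 : ∑ i, (x2 i / b) ^ 2 = 1 := by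
      rw [Finset.sum_congr rfl fun i _ => div_pow (x2 i) b 2, ← Finset.sum_div, ← hb2]
      exact div_self (by positivity)
    have e3 : ∑ i, (x3 i / c) ^ 2 = 1 := by
      rw [Finset.sum_congr rfl fun i _ => div_pow (x3 i) c 2, ← Finset.sum_div, ← hc2]
      exact div_self (by positivity)
    have e4 : ∑ i, (x4 i / d) ^ 2 = 1 := by
      rw [Finset.sum_congr rfl fun i _ => div_pow (x4 i) d 2, ← Finset.sum_div, ← hd2]
      exact div_self (by positivity)
    -- value at normalized vectors
    have key : (∑ i1, ∑ i2, ∑ i3, ∑ i4,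
        F i1 i2 i3 i4 * (x1 i1 / a) * (x2 i2 / b) * (x3 i3 / c) * (x4 i4 / d))
        = (a * b * c * d)⁻¹ * v := by
      rw [hval, Finset.mul_sum]
      refine Finset.sum_congr rfl fun i1 _ => ?_
      rw [Finset.mul_sum]
      refine Finset.sum_congr rfl fun i2 _ => ?_
      rw [Finset.mul_sum]
      refine Finset.sum_congr rfl fun i3 _ => ?_
      rw [Finset.mul_sum]
      refine Finset.sum_congr rfl fun i4 _ => ?_
      field_simp
    -- AM-GM : a*b*c*d ≤ 1
    have hac : a * c ≤ 1 := by nlinarith [sq_nonneg (a - c)]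
    have hbd : b * d ≤ 1 := by nlinarith [sq_nonneg (b - d)]
    have habcd : a * b * c * d ≤ 1 := by
      calc a * b * c * d = (a * c) * (b * d) := by ring
        _ ≤ 1 * 1 := by
            apply mul_le_mul hac hbd (by positivity) (by linarith)
        _ = 1 := by norm_num
    have habcd_pos : 0 < a * b * c * d := by positivity
    -- the normalized value belongs to the relaxed set
    have hle : (a * b * c * d)⁻¹ * v ≤ v := by
      refine hub ⟨fun i => x1 i / a, fun i => x2 i / b, fun i => x3 i / c, fun i => x4 i / d, ?_, ?_, key.symm⟩
      · rw [e1, e3]; norm_num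
      · rw [e2, e4]; norm_num
    have hge : v ≤ (a * b * c * d)⁻¹ * v := by
      have h1 : (1 : ℝ) ≤ (a * b * c * d)⁻¹ := (one_le_inv₀ habcd_pos).mpr habcd
      exact le_mul_of_one_le_left hpos.le h1
    have heq : (a * b * c * d)⁻¹ * v = v := le_antisymm hle hge
    exact ⟨fun i => x1 i / a, fun i => x2 i / b, fun i => x3 i / c, fun i => x4 i / d, e1, e2, e3, e4, (key.trans heq).symm⟩
  · intro t ht
    obtain ⟨y1, y2, y3, y4, f1, f2, f3, f4, ht⟩ := ht
    exact hub ⟨y1, y2, y3, y4, by rw [f1, f3]; norm_num, by rw [f2, f4]; norm_num, ht⟩
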